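/- Let s and s' be two strategy profiles that agree on every vertex except possibly at a single vertex i, and suppose t_i > 0. Then Φ₁(s') − Φ₁(s) = t_i · (u_i(s') − u_i(s)). In other words, Φ₁ is a weighted potential function (with weight t_i for player i) for the graph coordination game. -/

import Mathlib

open Finset

/-- Tie-strength of a pair of vertices: for adjacent pairs it is the edge weight plus the
sum, over common neighbours `k`, of `w i k + w j k`; it is `0` for non-adjacent pairs. -/
noncomputable def tieStrength {V : Type*} [Fintype V] (G : SimpleGraph V) [DecidableRel G.Adj]
    (w : V → V → ℝ) (i j : V) : ℝ :=
  if G.Adj i j then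
    w i j + ∑ k : V, (if G.Adj i k ∧ G.Adj j k then w i k + w j k else 0)
  else 0

/-- `t_i`: the sum of the tie-strengths of the edges adjacent to `i`. -/
noncomputable def tieTotal {V : Type*} [Fintype V] (G : SimpleGraph V) [DecidableRel G.Adj]
    (w : V → V → ℝ) (i : V) : ℝ :=
  ∑ j : V, tieStrength G w i j

/-- The agreement weight `a_i(s)` of vertex `i` in profile `s`:
the sum of tie-strengths `t(i,j)` over the vertices `j` choosing the same strategy as `i`. -/
noncomputable def agreeWeight {V : Type*} [Fintype V] (G : SimpleGraph V) [DecidableRel G.Adj]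
    (w : V → V → ℝ) {r : ℕ} (s : V → Fin r) (i : V) : ℝ :=
  ∑ j : V, if s j = s i then tieStrength G w i j else 0

/-- The utility `u_i(s) = a_i(s) / t_i` of player `i`. -/
noncomputable def utility1 {V : Type*} [Fintype V] (G : SimpleGraph V) [DecidableRel G.Adj]
    (w : V → V → ℝ) {r : ℕ} (s : V → Fin r) (i : V) : ℝ :=
  agreeWeight G w s i / tieTotal G w i

/-- The potential `Φ₁(s)`: the sum of tie-strengths over unordered edges whose endpoints
choose the same strategy, i.e. `(1/2) Σ_i Σ_{j : s j = s i} t(i,j)`. -/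
noncomputable def phi1 {V : Type*} [Fintype V] (G : SimpleGraph V) [DecidableRel G.Adj]
    (w : V → V → ℝ) {r : ℕ} (s : V → Fin r) : ℝ :=
  (1 / 2) * ∑ i : V, ∑ j : V, if s j = s i then tieStrength G w i j else 0

/-- The total tie-strength `W` of the network: the sum of `t(i,j)` over unordered pairs. -/
noncomputable def totalTie {V : Type*} [Fintype V] (G : SimpleGraph V) [DecidableRel G.Adj]
    (w : V → V → ℝ) : ℝ :=
  (1 / 2) * ∑ i : V, ∑ j : V, tieStrength G w i j


lemma tieStrength_symm {V : Type*} [Fintype V] (G : SimpleGraph V) [DecidableRel G.Adj]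
    (w : V → V → ℝ) (hw_symm : ∀ i j, w i j = w j i) (i j : V) :
    tieStrength G w i j = tieStrength G w j i := by
  unfold tieStrength
  by_cases h : G.Adj i j
  · rw [if_pos h, if_pos h.symm]
    congr 1
    · exact hw_symm i j
    · apply Finset.sum_congr rfl
      intro k _
      by_cases hk : G.Adj i k ∧ G.Adj j k
      · rw [if_pos hk, if_pos ⟨hk.2, hk.1⟩]; ring
      · rw [if_neg hk, if_neg (fun h' => hk ⟨h'.2, h'.1⟩)]
  · rw [if_neg h, if_neg (fun h' => h h'.symm)]

lemma tieStrength_self {V : Type*} [Fintype V] (G : SimpleGraph V) [DecidableRel G.Adj]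
    (w : V → V → ℝ) (i : V) : tieStrength G w i i = 0 := by
  unfold tieStrength
  rw [if_neg (G.irrefl (v := i))]

/-- If two strategy profiles `s` and `s'` agree on every vertex except
possibly at a single vertex `i`, and `t_i > 0`, then
`Φ₁(s') − Φ₁(s) = t_i · (u_i(s') − u_i(s))`: `Φ₁` is a weighted potential function
(with weight `t_i` for player `i`) for the graph coordination game. -/
theorem phi1_is_weighted_potential {V : Type*} [Fintype V] [DecidableEq V]
    (G : SimpleGraph V) [DecidableRel G.Adj] (w : V → V → ℝ)
    (hw_nonneg : ∀ i j, 0 ≤ w i j)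
    (hw_symm : ∀ i j, w i j = w j i)
    (hw_diag : ∀ i, w i i = 0)
    (hw_adj : ∀ i j, ¬ G.Adj i j → w i j = 0)
    (r : ℕ) (hr : 2 ≤ r)
    (s s' : V → Fin r) (i : V)
    (hagree : ∀ j, j ≠ i → s' j = s j)
    (hti : 0 < tieTotal G w i) :
    phi1 G w s' - phi1 G w s
      = tieTotal G w i * (utility1 G w s' i - utility1 G w s i) := by
  have tss := tieStrength_symm G w hw_symm
  set t := tieStrength G w with ht
  set D : V → V → ℝ := fun j k =>
    (if s' k = s' j then t j k else 0) - (if s k = s j then t j k else 0) with hD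
  have hDsymm : ∀ j k, D j k = D k j := by
    intro j k
    simp only [hD]
    congr 1
    · by_cases h : s' k = s' j
      · rw [if_pos h, if_pos h.symm, tss]
      · rw [if_neg h, if_neg (fun h' => h h'.symm)]
    · by_cases h : s k = s j
      · rw [if_pos h, if_pos h.symm, tss]
      · rw [if_neg h, if_neg (fun h' => h h'.symm)]
  have hDzero : ∀ j k, j ≠ i → k ≠ i → D j k = 0 := by
    intro j k hj hk
    simp only [hD, hagree j hj, hagree k hk, sub_self]
  have hDii : D i i = 0 := by
    simp [hD, tieStrength_self]
  have key : ∑ j : V, ∑ k : V, D j k = 2 * ∑ k : V, D i k := by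
    have h1 : ∑ j : V, ∑ k : V, D j k
        = ∑ k : V, D i k + ∑ j ∈ Finset.univ.erase i, ∑ k : V, D j k := by
      rw [← Finset.sum_erase_add _ _ (Finset.mem_univ i)]; ring
    have h2 : ∀ j ∈ Finset.univ.erase i, ∑ k : V, D j k = D j i := by
      intro j hj
      have hj' : j ≠ i := Finset.ne_of_mem_erase hj
      rw [← Finset.sum_erase_add _ _ (Finset.mem_univ i)]
      rw [Finset.sum_eq_zero (fun k hk => hDzero j k hj' (Finset.ne_of_mem_erase hk))]
      ring
    rw [h1, Finset.sum_congr rfl h2]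
    have h3 : ∑ j ∈ Finset.univ.erase i, D j i = ∑ j ∈ Finset.univ.erase i, D i j :=
      Finset.sum_congr rfl (fun j _ => hDsymm j i)
    rw [h3]
    have h4 : ∑ j ∈ Finset.univ.erase i, D i j = ∑ j : V, D i j := by
      rw [← Finset.sum_erase_add _ _ (Finset.mem_univ i), hDii, add_zero]
    rw [h4]; ring
  have hphi : phi1 G w s' - phi1 G w s = ∑ k : V, D i k := by
    unfold phi1
    rw [← mul_sub, ← Finset.sum_sub_distrib]
    simp only [← Finset.sum_sub_distrib]
    rw [key]; ring
  have haw : ∑ k : V, D i k = agreeWeight G w s' i - agreeWeight G w s i := by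
    unfold agreeWeight
    rw [← Finset.sum_sub_distrib]
  rw [hphi, haw]
  unfold utility1
  field_simp
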